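/- Let n ≥ 1 and γ ≥ 0, let ρ : ℝⁿ → ℝ be continuous with ρ(x) > 0 for all x, let d* : ℝⁿ → ℝ be continuous, and let χ : ℝⁿ → ℝ be continuous with compact support. Assume that x ↦ d*(x)·ρ(x) and x ↦ ρ(x)·log ρ(x) are Lebesgue-integrable on ℝⁿ. Then the function ε ↦ −∫_{ℝⁿ} d*(x)·(ρ(x)+ε·χ(x)) dx + γ·∫_{ℝⁿ} (ρ(x)+ε·χ(x))·log(ρ(x)+ε·χ(x)) dx has derivative at ε = 0 equal to ∫_{ℝⁿ} ( −d*(x) + γ·log ρ(x) + γ )·χ(x) dx. -/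

import Mathlib

open MeasureTheory Real

/-- First variation of the entropy-regularized 1-Wasserstein functional (with fixed
optimal critic `d*`): the map `ε ↦ -∫ d* (ρ+εχ) + γ ∫ (ρ+εχ) log(ρ+εχ)` has
derivative `∫ (-d* + γ log ρ + γ) χ` at `ε = 0`. -/
theorem first_variation_entropy_regularized_wasserstein (n : ℕ) (hn : 1 ≤ n)
    (γ : ℝ) (hγ : 0 ≤ γ)
    (ρ dstar χ : (Fin n → ℝ) → ℝ)
    (hρc : Continuous ρ) (hρpos : ∀ x, 0 < ρ x)
    (hdc : Continuous dstar)
    (hχc : Continuous χ) (hχsupp : HasCompactSupport χ)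
    (hint1 : Integrable (fun x => dstar x * ρ x) volume)
    (hint2 : Integrable (fun x => ρ x * Real.log (ρ x)) volume) :
    HasDerivAt
      (fun ε : ℝ =>
        -(∫ x, dstar x * (ρ x + ε * χ x)) +
          γ * ∫ x, (ρ x + ε * χ x) * Real.log (ρ x + ε * χ x))
      (∫ x, (-dstar x + γ * Real.log (ρ x) + γ) * χ x) 0 := by
  have hρne : ∀ x, ρ x ≠ 0 := fun x => (hρpos x).ne'
  -- integrability of various compactly supported continuous functions
  have hdχ : Integrable (fun x => dstar x * χ x) volume :=
    (hdc.mul hχc).integrable_of_hasCompactSupport hχsupp.mul_left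
  have hlogρc : Continuous fun x => Real.log (ρ x) := hρc.log hρne
  have hχlog : Integrable (fun x => χ x * (Real.log (ρ x) + 1)) volume :=
    (hχc.mul (hlogρc.add continuous_const)).integrable_of_hasCompactSupport
      hχsupp.mul_right
  -- bound on |χ|/ρ
  obtain ⟨C, hC⟩ : ∃ C, ∀ x, |χ x| / ρ x ≤ C := by
    have hg : Continuous fun x => |χ x| / ρ x := (hχc.abs.div hρc hρne)
    have hgs : HasCompactSupport fun x => |χ x| / ρ x := by
      apply hχsupp.mono
      intro x hx
      simp only [Function.mem_support] at hx ⊢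
      intro h0
      exact hx (by rw [h0, abs_zero, zero_div])
    obtain ⟨C, hC⟩ := hg.bounded_above_of_compact_support hgs
    exact ⟨C, fun x => le_trans (by rw [← Real.norm_eq_abs]; exact le_abs_self _) (hC x)⟩
  have hC0 : 0 ≤ C := le_trans (div_nonneg (abs_nonneg _) (hρpos Classical.ofNonempty).le)
    (hC Classical.ofNonempty)
  have hCχ : ∀ x, |χ x| ≤ C * ρ x := by
    intro x
    have := hC x
    rw [div_le_iff₀ (hρpos x)] at this
    linarith [this]
  set ε₀ : ℝ := 1 / (2 * (C + 1)) with hε₀def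
  have hε₀pos : 0 < ε₀ := by positivity
  -- key bounds for ε in the ball
  have hkey : ∀ ε ∈ Metric.ball (0 : ℝ) ε₀, ∀ x,
      ρ x / 2 ≤ ρ x + ε * χ x ∧ ρ x + ε * χ x ≤ 2 * ρ x := by
    intro ε hε x
    have hε' : |ε| < ε₀ := by simpa [Real.dist_eq] using hε
    have h1 : |ε * χ x| ≤ ρ x / 2 := by
      rw [abs_mul]
      calc |ε| * |χ x| ≤ ε₀ * (C * ρ x) :=
            mul_le_mul hε'.le (hCχ x) (abs_nonneg _) hε₀pos.le
        _ ≤ ρ x / 2 := by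
            rw [hε₀def]
            rw [div_mul_eq_mul_div, one_mul, div_le_div_iff₀ (by positivity) (by norm_num)]
            nlinarith [(hρpos x).le]
    have := abs_le.1 h1
    constructor <;> nlinarith [hρpos x]
  have hpos : ∀ ε ∈ Metric.ball (0 : ℝ) ε₀, ∀ x, 0 < ρ x + ε * χ x := by
    intro ε hε x
    have := (hkey ε hε x).1
    linarith [hρpos x]
  -- derivative of the entropy part via dominated convergence
  have hent : HasDerivAt (fun ε : ℝ => ∫ x, (ρ x + ε * χ x) * Real.log (ρ x + ε * χ x))
      (∫ x, χ x * (Real.log (ρ x) + 1)) 0 := by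
    have key := hasDerivAt_integral_of_dominated_loc_of_deriv_le (μ := volume)
      (F := fun ε x => (ρ x + ε * χ x) * Real.log (ρ x + ε * χ x))
      (F' := fun ε x => χ x * (Real.log (ρ x + ε * χ x) + 1))
      (x₀ := (0 : ℝ))
      (bound := fun x => |χ x| * (|Real.log (ρ x)| + Real.log 2 + 1))
      (Metric.ball_mem_nhds (0 : ℝ) hε₀pos)
      (by
        filter_upwards [Metric.ball_mem_nhds (0 : ℝ) hε₀pos] with ε hε
        exact ((hρc.add (continuous_const.mul hχc)).mul
          ((hρc.add (continuous_const.mul hχc)).log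
            (fun x => (hpos ε hε x).ne'))).aestronglyMeasurable)
      (by simpa using hint2)
      (by
        have : Continuous fun x => χ x * (Real.log (ρ x + 0 * χ x) + 1) := by
          simp only [zero_mul, add_zero]
          exact hχc.mul (hlogρc.add continuous_const)
        exact this.aestronglyMeasurable)
      (by
        refine ae_of_all _ fun x ε hε => ?_
        have h1 := (hkey ε hε x).1
        have h2 := (hkey ε hε x).2
        have hxpos := hpos ε hε x
        have hlb : Real.log (ρ x) - Real.log 2 ≤ Real.log (ρ x + ε * χ x) := by
          have := Real.log_le_log (half_pos (hρpos x)) h1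
          rw [Real.log_div (hρne x) (by norm_num)] at this
          linarith
        have hub : Real.log (ρ x + ε * χ x) ≤ Real.log (ρ x) + Real.log 2 := by
          have := Real.log_le_log hxpos h2
          rw [Real.log_mul (by norm_num) (hρne x)] at this
          linarith
        have habs : |Real.log (ρ x + ε * χ x)| ≤ |Real.log (ρ x)| + Real.log 2 := by
          rw [abs_le]
          constructor
          · have := neg_abs_le (Real.log (ρ x)); linarith
          · have := le_abs_self (Real.log (ρ x)); linarith
        rw [Real.norm_eq_abs, abs_mul]
        apply mul_le_mul_of_nonneg_left _ (abs_nonneg _)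
        calc |Real.log (ρ x + ε * χ x) + 1| ≤ |Real.log (ρ x + ε * χ x)| + 1 := by
              have := abs_add_le (Real.log (ρ x + ε * χ x)) 1
              simpa using this
          _ ≤ |Real.log (ρ x)| + Real.log 2 + 1 := by linarith)
      ((hχc.abs.mul ((hlogρc.abs.add continuous_const).add
          continuous_const)).integrable_of_hasCompactSupport
        (by
          apply HasCompactSupport.mul_right
          exact hχsupp.abs))
      (by
        refine ae_of_all _ fun x ε hε => ?_
        have hxpos := hpos ε hε x
        have hu : HasDerivAt (fun ε : ℝ => ρ x + ε * χ x) (χ x) ε := by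
          simpa using ((hasDerivAt_id ε).mul_const (χ x)).const_add (ρ x)
        have hd := hu.mul (((Real.hasDerivAt_log hxpos.ne').comp ε hu))
        refine hd.congr_deriv ?_
        rw [Function.comp_apply, mul_inv_cancel_left₀ hxpos.ne']
        ring)
    have := key.2
    simpa using this
  -- derivative of the linear part
  have hA : ∀ ε : ℝ, ∫ x, dstar x * (ρ x + ε * χ x) =
      (∫ x, dstar x * ρ x) + ε * ∫ x, dstar x * χ x := by
    intro ε
    have : ∀ x, dstar x * (ρ x + ε * χ x) = dstar x * ρ x + ε * (dstar x * χ x) := by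
      intro x; ring
    simp_rw [this]
    rw [integral_add hint1 (hdχ.const_mul ε), integral_const_mul]
  have hlin : HasDerivAt (fun ε : ℝ => -(∫ x, dstar x * (ρ x + ε * χ x)))
      (-(∫ x, dstar x * χ x)) 0 := by
    have h1 : HasDerivAt (fun ε : ℝ => -((∫ x, dstar x * ρ x) + ε * ∫ x, dstar x * χ x))
        (-(∫ x, dstar x * χ x)) 0 := by
      have := (((hasDerivAt_id (0:ℝ)).mul_const (∫ x, dstar x * χ x)).const_add
        (∫ x, dstar x * ρ x)).neg
      exact this.congr_deriv (by rw [one_mul])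
    refine h1.congr_of_eventuallyEq ?_
    filter_upwards with ε
    rw [hA ε]
  -- combine
  have htotal := hlin.add (hent.const_mul γ)
  refine htotal.congr_deriv ?_
  have hexp : ∀ x, (-dstar x + γ * Real.log (ρ x) + γ) * χ x =
      -(dstar x * χ x) + γ * (χ x * (Real.log (ρ x) + 1)) := by
    intro x; ring
  simp_rw [hexp]
  have hneg : Integrable (fun x => -(dstar x * χ x)) volume := hdχ.neg
  rw [integral_add hneg (hχlog.const_mul γ), integral_neg, integral_const_mul]
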